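/- Multi-tier preservation of composition: suppose the students of a school choice problem P are partitioned into nonempty tiers T_1, …, T_K such that for all k < l, every student in T_k has higher priority than every student in T_l at every school (i ▷_s j for all i ∈ T_k, j ∈ T_l, s ∈ S). Then for every stable-dominating matching ν, every school s ∈ S, and every tier index k, |ν⁻¹(s) ∩ T_k| = |DA⁻¹_s(P) ∩ T_k|. -/

import Mathlib

/-!
A school choice problem: finitely many students `I` and schools `S`
(with a distinguished null school of quota `|I|`).  Each student `i` has a
strict preference over schools represented by its rank function
`rk i : S → ℕ` (a bijection onto `{1, …, |S|}`, where rank 1 is the most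
preferred school); each school `s` has a quota `quota s ≥ 1` and a strict
priority over students represented by `prio s : I → ℕ`
(`i ▷_s j` iff `prio s i < prio s j`).
-/
structure SchoolChoice (I S : Type) [Fintype I] [Fintype S]
    [DecidableEq I] [DecidableEq S] where
  nullSchool : S
  quota : S → ℕ
  rk : I → S → ℕ
  prio : S → I → ℕ
  quota_pos : ∀ s : S, 1 ≤ quota s
  quota_null : quota nullSchool = Fintype.card I
  rk_inj : ∀ i : I, Function.Injective (rk i)
  rk_mem : ∀ (i : I) (s : S), rk i s ∈ Finset.Icc 1 (Fintype.card S)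
  prio_inj : ∀ s : S, Function.Injective (prio s)

namespace SchoolChoice

open scoped Classical

variable {I S : Type} [Fintype I] [Fintype S] [DecidableEq I] [DecidableEq S]

/-- `μ` is a matching: no school is assigned more students than its quota. -/
def IsMatching (P : SchoolChoice I S) (μ : I → S) : Prop :=
  ∀ s : S, (Finset.univ.filter fun i => μ i = s).card ≤ P.quota s

/-- Given the sets `R i` of schools that have rejected student `i` so far,
student `i` proposes to her most preferred school that has not rejected her. -/
noncomputable def propose (P : SchoolChoice I S) (R : I → Finset S) (i : I) : S :=
  if h : (Finset.univ \ R i).Nonempty then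
    (Finset.exists_min_image (Finset.univ \ R i) (P.rk i) h).choose
  else P.nullSchool

/-- At the DA round with rejection state `R`, school `s` rejects student `i`:
`i` applies to `s` and at least `quota s` applicants to `s` have higher priority. -/
def rejectsAt (P : SchoolChoice I S) (R : I → Finset S) (s : S) (i : I) : Prop :=
  P.propose R i = s ∧
    P.quota s ≤ (Finset.univ.filter fun j =>
      P.propose R j = s ∧ P.prio s j < P.prio s i).card

/-- One round of student-proposing Deferred Acceptance: record new rejections. -/
noncomputable def stepR (P : SchoolChoice I S) (R : I → Finset S) : I → Finset S :=
  fun i => R i ∪ (Finset.univ.filter fun s => P.rejectsAt R s i)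

/-- Rejection state after `n` rounds of Deferred Acceptance. -/
noncomputable def daR (P : SchoolChoice I S) : ℕ → I → Finset S
  | 0 => fun _ => (∅ : Finset S)
  | n + 1 => P.stepR (P.daR n)

/-- The outcome of the student-proposing Deferred Acceptance algorithm:
iterate rounds until no rejection occurs (which happens within
`|I|·|S| + 1` rounds); each student is matched to the school holding her. -/
noncomputable def DA (P : SchoolChoice I S) : I → S :=
  P.propose (P.daR (Fintype.card I * Fintype.card S + 1))

/-- A matching `ν` is stable-dominating if every student weakly prefers
`ν` to the DA outcome. -/
def StableDominating (P : SchoolChoice I S) (ν : I → S) : Prop :=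
  P.IsMatching ν ∧ ∀ i : I, P.rk i (ν i) ≤ P.rk i (P.DA i)

/-- Student `i` is unimprovable: every stable-dominating matching assigns `i`
to her DA school. -/
def Unimprovable (P : SchoolChoice I S) (i : I) : Prop :=
  ∀ ν : I → S, P.StableDominating ν → ν i = P.DA i

/-- Edge of the envy digraph `G^DA(P)`: `i` prefers `j`'s DA school to her own. -/
def Envy (P : SchoolChoice I S) (i j : I) : Prop :=
  P.rk i (P.DA j) < P.rk i (P.DA i)

/-- Student `i` lies on a directed cycle of the envy digraph `G^DA(P)`. -/
def OnCycle (P : SchoolChoice I S) (i : I) : Prop :=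
  ∃ (m : ℕ) (c : ℕ → I), 0 < m ∧ c 0 = i ∧ c m = i ∧
    ∀ k < m, P.Envy (c k) (c (k + 1))

/-- Student `i` desires school `s` in matching `μ`. -/
def Desires (P : SchoolChoice I S) (μ : I → S) (i : I) (s : S) : Prop :=
  P.rk i s < P.rk i (μ i)

/-- `μ` is non-wasteful: every desired school is filled to quota. -/
def NonWasteful (P : SchoolChoice I S) (μ : I → S) : Prop :=
  ∀ s : S, (∃ i : I, P.Desires μ i s) →
    (Finset.univ.filter fun i => μ i = s).card = P.quota s

/-- `μ` is stable: a non-wasteful matching with no priority violations. -/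
def Stable (P : SchoolChoice I S) (μ : I → S) : Prop :=
  P.IsMatching μ ∧ P.NonWasteful μ ∧
    ¬ ∃ (i j : I) (s : S), P.Desires μ i s ∧ μ j = s ∧ P.prio s i < P.prio s j

/-- `μ` Pareto-dominates `ν`. -/
def ParetoDominates (P : SchoolChoice I S) (μ ν : I → S) : Prop :=
  (∀ i : I, P.rk i (μ i) ≤ P.rk i (ν i)) ∧ ∃ i : I, P.rk i (μ i) < P.rk i (ν i)

/-- `μ` is a Pareto-efficient matching. -/
def ParetoEfficient (P : SchoolChoice I S) (μ : I → S) : Prop :=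
  P.IsMatching μ ∧ ∀ ν : I → S, P.IsMatching ν → ¬ P.ParetoDominates ν μ

end SchoolChoice
namespace SchoolChoice

open scoped Classical

variable {I S : Type} [Fintype I] [Fintype S] [DecidableEq I] [DecidableEq S]

lemma propose_spec' (P : SchoolChoice I S) (R : I → Finset S) (i : I)
    (h : P.nullSchool ∉ R i) :
    P.propose R i ∉ R i ∧ ∀ s ∉ R i, P.rk i (P.propose R i) ≤ P.rk i s := by
  have hne : (Finset.univ \ R i).Nonempty := ⟨P.nullSchool, by simp [h]⟩
  have hdef : P.propose R i
      = (Finset.exists_min_image (Finset.univ \ R i) (P.rk i) hne).choose := by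
    unfold propose; rw [dif_pos hne]
  have hspec := (Finset.exists_min_image (Finset.univ \ R i) (P.rk i) hne).choose_spec
  rw [hdef]
  refine ⟨?_, ?_⟩
  · have h1 := Finset.mem_sdiff.mp hspec.1
    exact h1.2
  · intro s hs
    exact hspec.2 s (by simp [hs])

lemma null_not_mem_daR (P : SchoolChoice I S) (n : ℕ) (i : I) :
    P.nullSchool ∉ P.daR n i := by
  induction n with
  | zero => simp [daR]
  | succ n ih =>
    intro hmem
    rcases Finset.mem_union.mp hmem with h | h
    · exact ih h
    · have hrej := (Finset.mem_filter.mp h).2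
      have hq := hrej.2
      rw [P.quota_null] at hq
      have hsub : (Finset.univ.filter fun j => P.propose (P.daR n) j = P.nullSchool ∧
          P.prio P.nullSchool j < P.prio P.nullSchool i) ⊆ Finset.univ.erase i := by
        intro j hj
        simp only [Finset.mem_filter] at hj
        exact Finset.mem_erase.mpr ⟨fun hji => by subst hji; exact lt_irrefl _ hj.2.2,
          Finset.mem_univ j⟩
      have h1 : (Finset.univ.filter fun j => P.propose (P.daR n) j = P.nullSchool ∧
          P.prio P.nullSchool j < P.prio P.nullSchool i).card ≤ Fintype.card I - 1 := by
        calc _ ≤ (Finset.univ.erase i).card := Finset.card_le_card hsub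
          _ = Fintype.card I - 1 := by
            rw [Finset.card_erase_of_mem (Finset.mem_univ i), Finset.card_univ]
      have hpos : 1 ≤ Fintype.card I := Fintype.card_pos_iff.mpr ⟨i⟩
      omega

lemma daR_mono (P : SchoolChoice I S) (i : I) {m n : ℕ} (h : m ≤ n) :
    P.daR m i ⊆ P.daR n i := by
  induction n, h using Nat.le_induction with
  | base => exact subset_rfl
  | succ n hmn ih =>
    refine ih.trans ?_
    show P.daR n i ⊆ P.stepR (P.daR n) i
    exact Finset.subset_union_left

lemma nat_select (A : Finset ℕ) (q : ℕ) (hq : q ≤ A.card) :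
    (A.filter fun a => (A.filter fun x => x < a).card < q).card = q := by
  classical
  set f : ℕ → ℕ := fun a => (A.filter fun x => x < a).card with hf
  have hmono : ∀ a ∈ A, ∀ b ∈ A, a < b → f a < f b := by
    intro a ha b hb hab
    apply Finset.card_lt_card
    have hsub : A.filter (fun x => x < a) ⊆ A.filter (fun x => x < b) :=
      Finset.monotone_filter_right A (fun x _ hx => hx.trans hab)
    rw [Finset.ssubset_iff_of_subset hsub]
    exact ⟨a, Finset.mem_filter.mpr ⟨ha, hab⟩, by simp⟩
  have hinj : Set.InjOn f A := by
    intro a ha b hb hfe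
    by_contra hne
    rcases lt_or_gt_of_ne hne with h | h
    · exact absurd hfe (ne_of_lt (hmono a ha b hb h))
    · exact absurd hfe.symm (ne_of_lt (hmono b hb a ha h))
  have hlt : ∀ a ∈ A, f a < A.card := by
    intro a ha
    have hsub : A.filter (fun x => x < a) ⊆ A.erase a := by
      intro x hx
      simp only [Finset.mem_filter] at hx
      exact Finset.mem_erase.mpr ⟨ne_of_lt hx.2, hx.1⟩
    calc f a ≤ (A.erase a).card := Finset.card_le_card hsub
      _ < A.card := Finset.card_erase_lt_of_mem ha
  have himage : A.image f = Finset.range A.card := by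
    apply Finset.eq_of_subset_of_card_le
    · intro y hy
      obtain ⟨a, ha, rfl⟩ := Finset.mem_image.mp hy
      exact Finset.mem_range.mpr (hlt a ha)
    · rw [Finset.card_range, Finset.card_image_of_injOn hinj]
  set B := A.filter fun a => f a < q with hB
  have hBimage : B.image f = Finset.range q := by
    apply Finset.Subset.antisymm
    · intro y hy
      obtain ⟨a, ha, rfl⟩ := Finset.mem_image.mp hy
      exact Finset.mem_range.mpr (Finset.mem_filter.mp ha).2
    · intro y hy
      have hy' : y ∈ A.image f := by
        rw [himage]
        exact Finset.mem_range.mpr (lt_of_lt_of_le (Finset.mem_range.mp hy) hq)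
      obtain ⟨a, ha, rfl⟩ := Finset.mem_image.mp hy'
      exact Finset.mem_image.mpr ⟨a, Finset.mem_filter.mpr ⟨ha, Finset.mem_range.mp hy⟩, rfl⟩
  have hcard : B.card = (B.image f).card :=
    (Finset.card_image_of_injOn (hinj.mono (Finset.coe_subset.mpr (Finset.filter_subset _ _)))).symm
  show B.card = q
  rw [hcard, hBimage, Finset.card_range]

lemma select_top {α : Type} [DecidableEq α] (A : Finset α) (g : α → ℕ)
    (hg : Function.Injective g) (q : ℕ) (hq : q ≤ A.card) :
    q ≤ (A.filter fun j => (A.filter fun x => g x < g j).card < q).card := by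
  classical
  have key : ∀ c : ℕ, (A.filter fun x => g x < c).card
      = ((A.image g).filter fun x => x < c).card := by
    intro c
    rw [Finset.filter_image, Finset.card_image_of_injective _ hg]
  have hB : (A.filter fun j => (A.filter fun x => g x < g j).card < q)
      = A.filter fun j => ((A.image g).filter fun x => x < g j).card < q := by
    apply Finset.filter_congr
    intro j _
    simp [key (g j)]
  rw [hB]
  have himg : ((A.filter fun j => ((A.image g).filter fun x => x < g j).card < q).image g)
      = (A.image g).filter (fun a => ((A.image g).filter fun x => x < a).card < q) :=
    (Finset.filter_image (p := fun a => ((A.image g).filter fun x => x < a).card < q)).symm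
  have hcard := nat_select (A.image g) q (by rwa [Finset.card_image_of_injective _ hg])
  have heq : (A.filter fun j => ((A.image g).filter fun x => x < g j).card < q).card
      = ((A.image g).filter fun a => ((A.image g).filter fun x => x < a).card < q).card := by
    rw [← himg, Finset.card_image_of_injective _ hg]
  rw [heq, hcard]

lemma persistence (P : SchoolChoice I S) (s : S) (p : ℕ) (n : ℕ)
    (h : P.quota s ≤ (Finset.univ.filter fun j =>
      P.propose (P.daR n) j = s ∧ P.prio s j < p).card) :
    P.quota s ≤ (Finset.univ.filter fun j =>
      P.propose (P.daR (n+1)) j = s ∧ P.prio s j < p).card := by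
  classical
  set q := P.quota s with hqdef
  set R := P.daR n with hR
  set A : Finset I := Finset.univ.filter fun j => P.propose R j = s ∧ P.prio s j < p with hA
  have hB : q ≤ (A.filter fun j => (A.filter fun x => P.prio s x < P.prio s j).card < q).card :=
    select_top A (P.prio s) (P.prio_inj s) q h
  refine le_trans hB (Finset.card_le_card ?_)
  intro j hj
  obtain ⟨hjA, hrank⟩ := Finset.mem_filter.mp hj
  obtain ⟨-, hprop, hpr⟩ := Finset.mem_filter.mp hjA
  have happl : (Finset.univ.filter fun x => P.propose R x = s ∧ P.prio s x < P.prio s j)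
      = A.filter fun x => P.prio s x < P.prio s j := by
    ext x
    simp only [hA, Finset.mem_filter, Finset.mem_univ, true_and]
    constructor
    · rintro ⟨h1, h2⟩; exact ⟨⟨h1, h2.trans hpr⟩, h2⟩
    · rintro ⟨⟨h1, -⟩, h2⟩; exact ⟨h1, h2⟩
  have hnorej : ¬ P.rejectsAt R s j := by
    rintro ⟨-, hq⟩
    rw [happl] at hq
    omega
  have hnull : ∀ m, P.nullSchool ∉ P.daR m j := fun m => P.null_not_mem_daR m j
  have hsR : s ∉ R j := by
    have hmem := (P.propose_spec' R j (hnull n)).1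
    rw [hprop] at hmem
    exact hmem
  have hstep : P.daR (n+1) j = P.daR n j ∪ (Finset.univ.filter fun s' => P.rejectsAt (P.daR n) s' j) := rfl
  have hsR' : s ∉ P.daR (n+1) j := by
    rw [hstep]
    intro hmem
    rcases Finset.mem_union.mp hmem with hc | hc
    · exact hsR hc
    · exact hnorej (Finset.mem_filter.mp hc).2
  have hle1 : P.rk j (P.propose (P.daR (n+1)) j) ≤ P.rk j s :=
    (P.propose_spec' _ j (hnull (n+1))).2 s hsR'
  have hsub : P.daR n j ⊆ P.daR (n+1) j := P.daR_mono j (Nat.le_succ n)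
  have hnm : P.propose (P.daR (n+1)) j ∉ P.daR n j :=
    fun hc => (P.propose_spec' _ j (hnull (n+1))).1 (hsub hc)
  have hle2 : P.rk j s ≤ P.rk j (P.propose (P.daR (n+1)) j) := by
    have hx := (P.propose_spec' R j (hnull n)).2 _ hnm
    rwa [hprop] at hx
  have heq : P.propose (P.daR (n+1)) j = s := P.rk_inj j (le_antisymm hle1 hle2)
  exact Finset.mem_filter.mpr ⟨Finset.mem_univ j, heq, hpr⟩

lemma full_beats (P : SchoolChoice I S) (i : I) (s : S)
    (h : P.rk i s < P.rk i (P.DA i)) :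
    P.quota s ≤ (Finset.univ.filter fun j => P.DA j = s ∧ P.prio s j < P.prio s i).card := by
  classical
  set N := Fintype.card I * Fintype.card S + 1 with hN
  have hDA : P.DA = P.propose (P.daR N) := by rw [hN]; rfl
  have hmem : s ∈ P.daR N i := by
    by_contra hs
    have hc := (P.propose_spec' (P.daR N) i (P.null_not_mem_daR N i)).2 s hs
    rw [← hDA] at hc
    omega
  have hex : ∀ m, s ∈ P.daR m i → ∃ n, n < m ∧ s ∉ P.daR n i ∧ s ∈ P.daR (n+1) i := by
    intro m
    induction m with
    | zero => intro hc; simp [daR] at hc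
    | succ m ih =>
      intro hc
      by_cases hm : s ∈ P.daR m i
      · obtain ⟨n, h1, h2, h3⟩ := ih hm
        exact ⟨n, Nat.lt_succ_of_lt h1, h2, h3⟩
      · exact ⟨m, Nat.lt_succ_self m, hm, hc⟩
  obtain ⟨n, hnN, hn1, hn2⟩ := hex N hmem
  have hrej : P.rejectsAt (P.daR n) s i := by
    have hstep : P.daR (n+1) i = P.daR n i ∪ (Finset.univ.filter fun s' => P.rejectsAt (P.daR n) s' i) := rfl
    rw [hstep] at hn2
    rcases Finset.mem_union.mp hn2 with hc | hc
    · exact absurd hc hn1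
    · exact (Finset.mem_filter.mp hc).2
  have hstart := hrej.2
  have hgen : ∀ m, P.quota s ≤ (Finset.univ.filter fun j =>
      P.propose (P.daR (n + m)) j = s ∧ P.prio s j < P.prio s i).card := by
    intro m
    induction m with
    | zero => simpa using hstart
    | succ m ih => exact P.persistence s (P.prio s i) (n+m) ih
  have hfin := hgen (N - n)
  rw [Nat.add_sub_cancel' (le_of_lt hnN)] at hfin
  rw [hDA]
  exact hfin

end SchoolChoice

/-- Multi-tier preservation of composition: if the students are
partitioned into nonempty tiers `T 1, …, T K` such that every student of a
lower-indexed tier has higher priority than every student of a higher-indexed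
tier at every school, then for every stable-dominating matching `ν`, every
school `s` and every tier `k`, the number of students of tier `k` at `s` is
the same as under DA. -/
theorem multitier_composition_preservation {I S : Type} [Fintype I] [Fintype S]
    [DecidableEq I] [DecidableEq S] (P : SchoolChoice I S)
    (K : ℕ) (T : Fin K → Finset I)
    (hne : ∀ k : Fin K, (T k).Nonempty)
    (hdisj : ∀ k l : Fin K, k ≠ l → Disjoint (T k) (T l))
    (hcover : ∀ i : I, ∃ k : Fin K, i ∈ T k)
    (hprio : ∀ (s : S) (k l : Fin K), k < l →
      ∀ i ∈ T k, ∀ j ∈ T l, P.prio s i < P.prio s j)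
    (ν : I → S) (hν : P.StableDominating ν) (s : S) (k : Fin K) :
    (Finset.univ.filter fun i => ν i = s ∧ i ∈ T k).card
      = (Finset.univ.filter fun i => P.DA i = s ∧ i ∈ T k).card := by
  classical
  set tier : I → Fin K := fun i => (hcover i).choose with htierdef
  have htmem : ∀ i : I, i ∈ T (tier i) := fun i => (hcover i).choose_spec
  have htiff : ∀ (i : I) (l : Fin K), i ∈ T l ↔ tier i = l := by
    intro i l
    constructor
    · intro hmem
      by_contra hnel
      exact Finset.disjoint_left.mp (hdisj _ _ hnel) (htmem i) hmem
    · rintro rfl; exact htmem i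
  have hprefix : ∀ (n : ℕ) (t : S),
      (Finset.univ.filter fun i => ν i = t ∧ (tier i).val < n).card
        = (Finset.univ.filter fun i => P.DA i = t ∧ (tier i).val < n).card := by
    intro n
    have hle : ∀ t : S, (Finset.univ.filter fun i => ν i = t ∧ (tier i).val < n).card
        ≤ (Finset.univ.filter fun i => P.DA i = t ∧ (tier i).val < n).card := by
      intro t
      by_cases hmove : ∃ i, ν i = t ∧ (tier i).val < n ∧ P.DA i ≠ t
      · obtain ⟨i, hvi, hti, hDAi⟩ := hmove
        have hlt : P.rk i t < P.rk i (P.DA i) := by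
          have hle' := hν.2 i
          rw [hvi] at hle'
          rcases lt_or_eq_of_le hle' with hcase | hcase
          · exact hcase
          · exact absurd (P.rk_inj i hcase).symm hDAi
        have hfull := P.full_beats i t hlt
        have hsub : (Finset.univ.filter fun j => P.DA j = t ∧ P.prio t j < P.prio t i)
            ⊆ (Finset.univ.filter fun j => P.DA j = t ∧ (tier j).val < n) := by
          intro j hj
          obtain ⟨-, hDAj, hpj⟩ := Finset.mem_filter.mp hj
          refine Finset.mem_filter.mpr ⟨Finset.mem_univ j, hDAj, ?_⟩
          have hjt : tier j ≤ tier i := by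
            by_contra hc
            push_neg at hc
            exact absurd (hprio t (tier i) (tier j) hc i (htmem i) j (htmem j)) (by omega)
          calc (tier j).val ≤ (tier i).val := hjt
            _ < n := hti
        calc (Finset.univ.filter fun i => ν i = t ∧ (tier i).val < n).card
            ≤ (Finset.univ.filter fun i => ν i = t).card := Finset.card_le_card (by
              intro x hx
              obtain ⟨-, h1, -⟩ := Finset.mem_filter.mp hx
              exact Finset.mem_filter.mpr ⟨Finset.mem_univ x, h1⟩)
          _ ≤ P.quota t := hν.1 t
          _ ≤ _ := le_trans hfull (Finset.card_le_card hsub)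
      · push_neg at hmove
        apply Finset.card_le_card
        intro x hx
        obtain ⟨-, h1, h2⟩ := Finset.mem_filter.mp hx
        exact Finset.mem_filter.mpr ⟨Finset.mem_univ x, hmove x h1 h2, h2⟩
    have e1 : ∀ (μ : I → S),
        ∑ t : S, (Finset.univ.filter fun i => μ i = t ∧ (tier i).val < n).card
          = (Finset.univ.filter fun i => (tier i).val < n).card := by
      intro μ
      have hfib := Finset.card_eq_sum_card_fiberwise
        (s := Finset.univ.filter fun i : I => (tier i).val < n)
        (t := (Finset.univ : Finset S)) (f := μ) (fun x _ => Finset.mem_univ _)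
      rw [hfib]
      apply Finset.sum_congr rfl
      intro t _
      congr 1
      ext x
      simp only [Finset.mem_filter, Finset.mem_univ, true_and]
      tauto
    have hsum : ∑ t : S, (Finset.univ.filter fun i => ν i = t ∧ (tier i).val < n).card
        = ∑ t : S, (Finset.univ.filter fun i => P.DA i = t ∧ (tier i).val < n).card := by
      rw [e1 ν, e1 P.DA]
    intro t
    by_contra hne2
    have hlt2 : (Finset.univ.filter fun i => ν i = t ∧ (tier i).val < n).card
        < (Finset.univ.filter fun i => P.DA i = t ∧ (tier i).val < n).card :=
      lt_of_le_of_ne (hle t) hne2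
    exact absurd hsum (ne_of_lt (Finset.sum_lt_sum (fun t _ => hle t)
      ⟨t, Finset.mem_univ t, hlt2⟩))
  have hTk : ∀ (μ : I → S), (Finset.univ.filter fun i => μ i = s ∧ i ∈ T k)
      = Finset.univ.filter fun i => μ i = s ∧ (tier i).val = k.val := by
    intro μ
    ext x
    simp only [Finset.mem_filter, Finset.mem_univ, true_and]
    constructor
    · rintro ⟨h1, h2⟩
      exact ⟨h1, by rw [(htiff x k).mp h2]⟩
    · rintro ⟨h1, h2⟩
      have hx : tier x = k := Fin.ext h2
      exact ⟨h1, hx ▸ htmem x⟩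
  have hsplit : ∀ (μ : I → S),
      (Finset.univ.filter fun i => μ i = s ∧ (tier i).val < k.val + 1).card
        = (Finset.univ.filter fun i => μ i = s ∧ (tier i).val < k.val).card
          + (Finset.univ.filter fun i => μ i = s ∧ (tier i).val = k.val).card := by
    intro μ
    have hd : Disjoint (Finset.univ.filter fun i => μ i = s ∧ (tier i).val < k.val)
        (Finset.univ.filter fun i => μ i = s ∧ (tier i).val = k.val) := by
      rw [Finset.disjoint_left]
      intro x hx hy
      obtain ⟨-, -, h2⟩ := Finset.mem_filter.mp hx
      obtain ⟨-, -, h4⟩ := Finset.mem_filter.mp hy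
      omega
    rw [← Finset.card_union_of_disjoint hd]
    congr 1
    ext x
    simp only [Finset.mem_union, Finset.mem_filter, Finset.mem_univ, true_and]
    constructor
    · rintro ⟨h1, h2⟩
      rcases Nat.lt_succ_iff_lt_or_eq.mp h2 with hc | hc
      · exact Or.inl ⟨h1, hc⟩
      · exact Or.inr ⟨h1, hc⟩
    · rintro (⟨h1, h2⟩ | ⟨h1, h2⟩)
      · exact ⟨h1, by omega⟩
      · exact ⟨h1, by omega⟩
  rw [hTk ν, hTk P.DA]
  have h1 := hprefix k.val s
  have h2 := hprefix (k.val + 1) s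
  have e1 := hsplit ν
  have e2 := hsplit P.DA
  omega
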